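/- arXiv:1309.1952 — 4 statements merged into one kernel-verified Lean document; each statement's English description precedes it below -/
import Mathlib

section
/- Let y_k = A x_k and y_l = A x_l where A has unit-norm columns with pairwise incoherence |⟨a_i,a_j⟩| < μ₀/√d, and x_k, x_l are s-sparse with nonzero entries having absolute values in [m, M]. If the supports of x_k and x_l intersect in exactly one index i*, then |⟨y_k, y_l⟩| ≥ m² - s²M²μ₀/√d. -/
theorem stmt_5 (d r s : ℕ) (μ₀ m M : ℝ) (hμ₀ : 0 < μ₀) (hm : 0 < m) (hmM : m ≤ M)
    (A : Matrix (Fin d) (Fin r) ℝ)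
    (hnorm : ∀ j, ∑ i, (A i j) ^ 2 = 1)
    (hincoh : ∀ i j, i ≠ j → |∑ k, A k i * A k j| < μ₀ / Real.sqrt d)
    (xk xl : Fin r → ℝ)
    (hsk : (Finset.univ.filter fun j => xk j ≠ 0).card = s)
    (hsl : (Finset.univ.filter fun j => xl j ≠ 0).card = s)
    (hbk : ∀ j, xk j ≠ 0 → m ≤ |xk j| ∧ |xk j| ≤ M)
    (hbl : ∀ j, xl j ≠ 0 → m ≤ |xl j| ∧ |xl j| ≤ M)
    (istar : Fin r)
    (hint : (Finset.univ.filter fun j => xk j ≠ 0) ∩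
        (Finset.univ.filter fun j => xl j ≠ 0) = {istar})
    (yk yl : Fin d → ℝ) (hyk : yk = A.mulVec xk) (hyl : yl = A.mulVec xl) :
    m ^ 2 - (s : ℝ) ^ 2 * M ^ 2 * μ₀ / Real.sqrt d ≤ |∑ i, yk i * yl i| := by
  have hμ'0 : 0 ≤ μ₀ / Real.sqrt d := div_nonneg hμ₀.le (Real.sqrt_nonneg _)
  set S := Finset.univ.filter fun j => xk j ≠ 0 with hS
  set T := Finset.univ.filter fun j => xl j ≠ 0 with hT
  have hiST : istar ∈ S ∩ T := hint ▸ Finset.mem_singleton_self istar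
  have hiS : istar ∈ S := (Finset.mem_inter.1 hiST).1
  have hiT : istar ∈ T := (Finset.mem_inter.1 hiST).2
  set f : Fin r × Fin r → ℝ := fun z => xk z.1 * xl z.2 * (∑ i, A i z.1 * A i z.2) with hf
  have key1 : ∑ i, yk i * yl i = ∑ p, ∑ q, f (p, q) := by
    subst hyk hyl
    simp only [Matrix.mulVec, dotProduct, hf, Finset.sum_mul_sum]
    rw [Finset.sum_comm]
    refine Finset.sum_congr rfl fun p _ => ?_
    rw [Finset.sum_comm]
    refine Finset.sum_congr rfl fun q _ => ?_
    rw [Finset.mul_sum]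
    exact Finset.sum_congr rfl fun i _ => by ring
  have key2 : ∑ i, yk i * yl i = ∑ z ∈ S ×ˢ T, f z := by
    rw [key1, ← Finset.sum_product']
    symm
    refine Finset.sum_subset (Finset.subset_univ _) fun z _ hz => ?_
    simp only [Finset.mem_product, hS, hT, Finset.mem_filter, Finset.mem_univ, true_and,
      not_and_or, not_not] at hz
    rcases hz with h | h <;> simp [hf, h]
  have hz : (istar, istar) ∈ S ×ˢ T := Finset.mem_product.2 ⟨hiS, hiT⟩
  rw [key2, ← Finset.add_sum_erase _ _ hz]
  have hGi : (∑ i, A i istar * A i istar) = 1 := by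
    rw [← hnorm istar]; exact Finset.sum_congr rfl fun i _ => (sq (A i istar)).symm
  have hxk : xk istar ≠ 0 := (Finset.mem_filter.1 hiS).2
  have hxl : xl istar ≠ 0 := (Finset.mem_filter.1 hiT).2
  have h1 : m ^ 2 ≤ |f (istar, istar)| := by
    simp only [hf, hGi, mul_one, abs_mul]
    calc m ^ 2 = m * m := sq m
    _ ≤ |xk istar| * |xl istar| :=
      mul_le_mul (hbk istar hxk).1 (hbl istar hxl).1 hm.le (abs_nonneg _)
  have hbound : ∀ z ∈ (S ×ˢ T).erase (istar, istar), |f z| ≤ M * M * (μ₀ / Real.sqrt d) := by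
    rintro ⟨p, q⟩ hzmem
    have hne : (p, q) ≠ (istar, istar) := Finset.ne_of_mem_erase hzmem
    have hmem := Finset.mem_of_mem_erase hzmem
    have hpS : p ∈ S := (Finset.mem_product.1 hmem).1
    have hqT : q ∈ T := (Finset.mem_product.1 hmem).2
    have hpq : p ≠ q := by
      rintro rfl
      have : p ∈ S ∩ T := Finset.mem_inter.2 ⟨hpS, hqT⟩
      rw [hint] at this
      exact hne (by simpa using Finset.mem_singleton.1 this)
    have hG : |∑ i, A i p * A i q| ≤ μ₀ / Real.sqrt d := (hincoh p q hpq).le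
    have hk : |xk p| ≤ M := (hbk p (Finset.mem_filter.1 hpS).2).2
    have hl : |xl q| ≤ M := (hbl q (Finset.mem_filter.1 hqT).2).2
    calc |f (p, q)| = |xk p| * |xl q| * |∑ i, A i p * A i q| := by
          simp [hf, abs_mul]
      _ ≤ M * M * (μ₀ / Real.sqrt d) := by
          apply mul_le_mul (mul_le_mul hk hl (abs_nonneg _) (hm.le.trans hmM))
            hG (abs_nonneg _)
          exact mul_nonneg (hm.le.trans hmM) (hm.le.trans hmM)
  have h2 : ∑ z ∈ (S ×ˢ T).erase (istar, istar), |f z|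
      ≤ (s : ℝ) ^ 2 * M ^ 2 * μ₀ / Real.sqrt d := by
    calc ∑ z ∈ (S ×ˢ T).erase (istar, istar), |f z|
        ≤ ((S ×ˢ T).erase (istar, istar)).card • (M * M * (μ₀ / Real.sqrt d)) :=
          Finset.sum_le_card_nsmul _ _ _ hbound
      _ = (((S ×ˢ T).erase (istar, istar)).card : ℝ) * (M * M * (μ₀ / Real.sqrt d)) := by
          rw [nsmul_eq_mul]
      _ ≤ ((s : ℝ) * s) * (M * M * (μ₀ / Real.sqrt d)) := by
          apply mul_le_mul_of_nonneg_right _ (mul_nonneg (mul_nonneg (hm.le.trans hmM) (hm.le.trans hmM)) hμ'0)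
          have : ((S ×ˢ T).erase (istar, istar)).card ≤ s * s := by
            calc ((S ×ˢ T).erase (istar, istar)).card ≤ (S ×ˢ T).card :=
                Finset.card_le_card (Finset.erase_subset _ _)
              _ = s * s := by rw [Finset.card_product, hsk, hsl]
          exact_mod_cast this
      _ = (s : ℝ) ^ 2 * M ^ 2 * μ₀ / Real.sqrt d := by ring
  have h3 : |∑ z ∈ (S ×ˢ T).erase (istar, istar), f z|
      ≤ ∑ z ∈ (S ×ˢ T).erase (istar, istar), |f z| := Finset.abs_sum_le_sum_abs _ _
  have habs : |f (istar, istar)| - |∑ z ∈ (S ×ˢ T).erase (istar, istar), f z|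
      ≤ |f (istar, istar) + ∑ z ∈ (S ×ˢ T).erase (istar, istar), f z| := by
    have := abs_sub_abs_le_abs_sub (f (istar, istar))
      (-(∑ z ∈ (S ×ˢ T).erase (istar, istar), f z))
    rwa [abs_neg, sub_neg_eq_add] at this
  linarith
end

section
/- Let S be a uniformly random s-element subset of [r] (the support of a sample), and fix two sets S₁, S₂ ⊆ [r] of size s each with S₁ ∩ S₂ = {a}. Then the conditional probability that S ∩ S₁ and S ∩ S₂ are both nonempty but it is NOT the case that S ∩ S₁ = S ∩ S₂ = {a}, is at most s³/r times the probability that a ∈ S. Equivalently: P[¬(S∩S₁ = S∩S₂ = {a}) and S∩S₁ ≠ ∅ and S∩S₂ ≠ ∅] ≤ (s³/r)·P[a ∈ S]. -/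
open Finset

lemma count_sub {n k : ℕ} (t : Finset (Fin n)) (hkc : t.card ≤ k) :
    ((Finset.univ.powersetCard k).filter (fun S => t ⊆ S)).card
      = (n - t.card).choose (k - t.card) := by
  have hcc : (tᶜ : Finset (Fin n)).card = n - t.card := by
    simp [Finset.card_compl]
  rw [← hcc, ← Finset.card_powersetCard (k - t.card) tᶜ]
  apply Finset.card_bij' (fun S _ => S \ t) (fun U _ => U ∪ t)
  · intro S hS
    simp only [mem_filter, mem_powersetCard] at hS
    obtain ⟨⟨_, hcard⟩, hts⟩ := hS
    simp only [mem_powersetCard]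
    constructor
    · intro x hx; simp only [mem_sdiff] at hx; simp [hx.2]
    · rw [Finset.card_sdiff_of_subset hts, hcard]
  · intro U hU
    simp only [mem_powersetCard] at hU
    simp only [mem_filter, mem_powersetCard]
    have hd : Disjoint U t := by
      refine Finset.disjoint_left.2 fun x hx hxt => ?_
      have := hU.1 hx; simp at this; exact this hxt
    refine ⟨⟨Finset.subset_univ _, ?_⟩, Finset.subset_union_right⟩
    rw [Finset.card_union_of_disjoint hd, hU.2]
    omega
  · intro S hS
    simp only [mem_filter, mem_powersetCard] at hS
    rw [Finset.sdiff_union_of_subset hS.2]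
  · intro U hU
    simp only [mem_powersetCard] at hU
    have hd : Disjoint U t := by
      refine Finset.disjoint_left.2 fun x hx hxt => ?_
      have := hU.1 hx; simp at this; exact this hxt
    rw [Finset.union_sdiff_cancel_right hd]

open Finset

theorem stmt_8 (r s : ℕ) (hs : 0 < s) (hsr : s ≤ r)
    (S₁ S₂ : Finset (Fin r)) (a : Fin r)
    (h₁ : S₁.card = s) (h₂ : S₂.card = s) (hint : S₁ ∩ S₂ = {a}) :
    (((Finset.univ.powersetCard s).filter fun S : Finset (Fin r) =>
        ¬(S ∩ S₁ = {a} ∧ S ∩ S₂ = {a}) ∧ (S ∩ S₁).Nonempty ∧ (S ∩ S₂).Nonempty).card : ℝ) ≤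
      ((s : ℝ) ^ 3 / r) *
        (((Finset.univ.powersetCard s).filter fun S : Finset (Fin r) => a ∈ S).card : ℝ) := by
  have hr : 0 < r := a.pos
  have haS₁ : a ∈ S₁ := by
    have : a ∈ S₁ ∩ S₂ := by rw [hint]; exact mem_singleton_self a
    exact (mem_inter.1 this).1
  have haS₂ : a ∈ S₂ := by
    have : a ∈ S₁ ∩ S₂ := by rw [hint]; exact mem_singleton_self a
    exact (mem_inter.1 this).2
  -- count of a ∈ S sets
  have hcount_a : ((Finset.univ.powersetCard s).filter fun S : Finset (Fin r) => a ∈ S).card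
      = (r - 1).choose (s - 1) := by
    have := count_sub (n := r) (k := s) {a} (by simp; omega)
    simpa [Finset.singleton_subset_iff] using this
  rcases eq_or_lt_of_le (show 1 ≤ s from hs) with hs1 | hs2
  · -- s = 1 : event is empty
    have hS₁a : S₁ = {a} := by
      obtain ⟨y, hy⟩ := Finset.card_eq_one.1 (h₁.trans hs1.symm)
      rw [hy] at haS₁; simp at haS₁; rw [hy, haS₁]
    have hS₂a : S₂ = {a} := by
      have h := Finset.card_eq_one.1 (h₂.trans hs1.symm)
      obtain ⟨y, hy⟩ := h
      rw [hy] at haS₂; simp at haS₂; rw [hy, haS₂]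
    have : ((Finset.univ.powersetCard s).filter fun S : Finset (Fin r) =>
        ¬(S ∩ S₁ = {a} ∧ S ∩ S₂ = {a}) ∧ (S ∩ S₁).Nonempty ∧ (S ∩ S₂).Nonempty) = ∅ := by
      apply Finset.filter_false_of_mem
      intro S _
      rintro ⟨hne, h1, h2⟩
      apply hne
      have hsub : S ∩ S₁ ⊆ {a} := by rw [hS₁a]; exact inter_subset_right
      have hsub2 : S ∩ S₂ ⊆ {a} := by rw [hS₂a]; exact inter_subset_right
      constructor
      · exact (Finset.Nonempty.subset_singleton_iff h1).1 hsub
      · exact (Finset.Nonempty.subset_singleton_iff h2).1 hsub2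
    rw [this]
    simp only [Finset.card_empty, Nat.cast_zero]
    positivity
  · -- s ≥ 2
    have hr2 : 2 ≤ r := le_trans hs2 hsr
    set A := ((Finset.univ.powersetCard s).filter fun S : Finset (Fin r) =>
        ¬(S ∩ S₁ = {a} ∧ S ∩ S₂ = {a}) ∧ (S ∩ S₁).Nonempty ∧ (S ∩ S₂).Nonempty) with hA
    set P := (S₁ ×ˢ S₂).filter (fun p : Fin r × Fin r => p.1 ≠ p.2) with hP
    have hsubset : A ⊆ P.biUnion (fun p =>
        (Finset.univ.powersetCard s).filter (fun S => {p.1, p.2} ⊆ S)) := by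
      intro S hS
      simp only [hA, mem_filter] at hS
      obtain ⟨hSmem, hne, h1, h2⟩ := hS
      obtain ⟨x₀, hx₀⟩ := h1
      obtain ⟨y₀, hy₀⟩ := h2
      simp only [mem_inter] at hx₀ hy₀
      -- find x y with x ∈ S ∩ S₁, y ∈ S ∩ S₂, x ≠ y
      have key : ∃ x y, x ∈ S ∧ x ∈ S₁ ∧ y ∈ S ∧ y ∈ S₂ ∧ x ≠ y := by
        by_cases hxy : x₀ = y₀
        · -- then x₀ = a
          have hx₀a : x₀ = a := by
            have : x₀ ∈ S₁ ∩ S₂ := mem_inter.2 ⟨hx₀.2, hxy ▸ hy₀.2⟩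
            rw [hint] at this; simpa using this
          -- one of the intersections differs from {a}
          have ha₁ : a ∈ S ∩ S₁ := hx₀a ▸ mem_inter.2 hx₀
          have ha₂ : a ∈ S ∩ S₂ := (hxy ▸ hx₀a : y₀ = a) ▸ mem_inter.2 hy₀
          by_cases hc : S ∩ S₁ = {a}
          · have hc2 : S ∩ S₂ ≠ {a} := fun h => hne ⟨hc, h⟩
            obtain ⟨y, hy, hyne⟩ : ∃ y ∈ S ∩ S₂, y ≠ a := by
              by_contra h
              push_neg at h
              exact hc2 (Finset.eq_singleton_iff_unique_mem.2 ⟨ha₂, fun y hy => h y hy⟩)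
            simp only [mem_inter] at hy
            exact ⟨a, y, (mem_inter.1 ha₁).1, haS₁, hy.1, hy.2, fun h => hyne h.symm⟩
          · obtain ⟨x, hx, hxne⟩ : ∃ x ∈ S ∩ S₁, x ≠ a := by
              by_contra h
              push_neg at h
              exact hc (Finset.eq_singleton_iff_unique_mem.2 ⟨ha₁, fun x hx => h x hx⟩)
            simp only [mem_inter] at hx
            exact ⟨x, a, hx.1, hx.2, (mem_inter.1 ha₂).1, haS₂, hxne⟩
        · exact ⟨x₀, y₀, hx₀.1, hx₀.2, hy₀.1, hy₀.2, hxy⟩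
      obtain ⟨x, y, hxS, hxS₁, hyS, hyS₂, hxy⟩ := key
      refine Finset.mem_biUnion.2 ⟨(x, y), ?_, ?_⟩
      · simp [hP, mem_filter, Finset.mem_product, hxS₁, hyS₂, hxy]
      · simp only [mem_filter]
        exact ⟨hSmem, by intro z hz; simp at hz; rcases hz with h | h <;> simp [h, hxS, hyS]⟩
    have hpaircount : ∀ p ∈ P, ((Finset.univ.powersetCard s).filter
        (fun S => {p.1, p.2} ⊆ S)).card = (r - 2).choose (s - 2) := by
      intro p hp
      simp only [hP, mem_filter] at hp
      have hcard2 : ({p.1, p.2} : Finset (Fin r)).card = 2 := Finset.card_pair hp.2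
      have := count_sub (n := r) (k := s) {p.1, p.2} (by omega)
      rw [hcard2] at this
      exact this
    have hAcard : A.card ≤ s ^ 2 * (r - 2).choose (s - 2) := by
      calc A.card ≤ (P.biUnion (fun p =>
            (Finset.univ.powersetCard s).filter (fun S => {p.1, p.2} ⊆ S))).card :=
          Finset.card_le_card hsubset
        _ ≤ ∑ p ∈ P, ((Finset.univ.powersetCard s).filter
            (fun S => {p.1, p.2} ⊆ S)).card := Finset.card_biUnion_le
        _ = ∑ _p ∈ P, (r - 2).choose (s - 2) := Finset.sum_congr rfl hpaircount
        _ = P.card * (r - 2).choose (s - 2) := by rw [Finset.sum_const, smul_eq_mul]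
        _ ≤ s ^ 2 * (r - 2).choose (s - 2) := by
            apply Nat.mul_le_mul_right
            calc P.card ≤ (S₁ ×ˢ S₂).card := Finset.card_filter_le _ _
              _ = s ^ 2 := by rw [Finset.card_product, h₁, h₂]; ring
    -- key numeric inequality: r * (s^2 * C(r-2,s-2)) ≤ s^3 * C(r-1,s-1)
    have hid : (r - 1) * (r - 2).choose (s - 2) = (r - 1).choose (s - 1) * (s - 1) := by
      have := Nat.add_one_mul_choose_eq (r - 2) (s - 2)
      have e1 : r - 2 + 1 = r - 1 := by omega
      have e2 : s - 2 + 1 = s - 1 := by omega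
      rw [e1, e2] at this
      exact this
    have hnat : r * (s ^ 2 * (r - 2).choose (s - 2)) ≤ s ^ 3 * (r - 1).choose (s - 1) := by
      have hmul : (r - 1) * (r * (s ^ 2 * (r - 2).choose (s - 2)))
          ≤ (r - 1) * (s ^ 3 * (r - 1).choose (s - 1)) := by
        have lhs_eq : (r - 1) * (r * (s ^ 2 * (r - 2).choose (s - 2)))
            = r * s ^ 2 * ((r - 1) * (r - 2).choose (s - 2)) := by ring
        rw [lhs_eq, hid]
        have : r * (s - 1) ≤ s * (r - 1) := by
          have h1 : r * (s - 1) + r = r * s := by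
            have e : s - 1 + 1 = s := Nat.sub_add_cancel (by omega)
            calc r * (s - 1) + r = r * ((s - 1) + 1) := by ring
              _ = r * s := by rw [e]
          have h2 : s * (r - 1) + s = s * r := by
            have e : r - 1 + 1 = r := Nat.sub_add_cancel (by omega)
            calc s * (r - 1) + s = s * ((r - 1) + 1) := by ring
              _ = s * r := by rw [e]
          have h3 : r * s = s * r := Nat.mul_comm r s
          linarith
        calc r * s ^ 2 * ((r - 1).choose (s - 1) * (s - 1))
            = (r * (s - 1)) * (s ^ 2 * (r - 1).choose (s - 1)) := by ring
          _ ≤ (s * (r - 1)) * (s ^ 2 * (r - 1).choose (s - 1)) :=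
              Nat.mul_le_mul_right _ this
          _ = (r - 1) * (s ^ 3 * (r - 1).choose (s - 1)) := by ring
      exact Nat.le_of_mul_le_mul_left hmul (by omega)
    -- conclude over ℝ
    rw [hcount_a]
    rw [div_mul_eq_mul_div, le_div_iff₀ (by exact_mod_cast hr)]
    calc (A.card : ℝ) * r ≤ (s ^ 2 * (r - 2).choose (s - 2) : ℕ) * r := by
          exact_mod_cast mul_le_mul_of_nonneg_right (by exact_mod_cast hAcard) (by positivity)
      _ ≤ (s : ℝ) ^ 3 * ((r - 1).choose (s - 1) : ℕ) := by
          have h : ((r * (s ^ 2 * (r - 2).choose (s - 2)) : ℕ) : ℝ)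
              ≤ ((s ^ 3 * (r - 1).choose (s - 1) : ℕ) : ℝ) := Nat.cast_le.2 hnat
          push_cast at h ⊢
          ring_nf at h ⊢
          linarith
end

section
/- Let S and S' be two independent uniformly random s-element subsets of [r], and fix two s-element subsets S₁, S₂ with S₁ ∩ S₂ = {a}. Assume s³ ≤ r/5 and s² ≤ r/40. Then conditioned on the event that S∩S₁ ≠ ∅, S∩S₂ ≠ ∅, S'∩S₁ ≠ ∅, S'∩S₂ ≠ ∅, the probability that S ∩ S' = S ∩ S₁ = S ∩ S₂ = S' ∩ S₁ = S' ∩ S₂ = {a} is at least 1 - 24s³/r. -/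
open Finset

section aux
variable {r : ℕ}

lemma count_supset (T : Finset (Fin r)) {s : ℕ} (hT : T.card ≤ s) :
    ((Finset.univ.powersetCard s).filter (fun S => T ⊆ S)).card
      = (r - T.card).choose (s - T.card) := by
  have key : ((Finset.univ.powersetCard s).filter (fun S => T ⊆ S)).card
      = (Tᶜ.powersetCard (s - T.card)).card := by
    apply Finset.card_bij' (fun S _ => S \ T) (fun U _ => U ∪ T)
    · intro S hS
      simp only [mem_filter, mem_powersetCard] at hS
      rw [mem_powersetCard]
      refine ⟨fun x hx => ?_, ?_⟩
      · simp only [mem_sdiff] at hx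
        simpa using hx.2
      · rw [card_sdiff_of_subset hS.2, hS.1.2]
    · intro U hU
      rw [mem_powersetCard] at hU
      have hdisj : Disjoint U T := by
        rw [disjoint_left]
        intro x hx
        have := hU.1 hx
        simpa using this
      simp only [mem_filter, mem_powersetCard]
      refine ⟨⟨subset_univ _, ?_⟩, subset_union_right⟩
      rw [card_union_of_disjoint hdisj, hU.2, Nat.sub_add_cancel hT]
    · intro S hS
      simp only [mem_filter, mem_powersetCard] at hS
      exact sdiff_union_of_subset hS.2
    · intro U hU
      rw [mem_powersetCard] at hU
      have hdisj : Disjoint U T := by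
        rw [disjoint_left]
        intro x hx
        have := hU.1 hx
        simpa using this
      rw [union_sdiff_right, sdiff_eq_self_of_disjoint hdisj]
  rw [key, card_powersetCard, card_compl, Fintype.card_fin]

lemma count_mem (a : Fin r) {s : ℕ} (hs : 1 ≤ s) :
    ((Finset.univ.powersetCard s).filter (fun S => a ∈ S)).card
      = (r - 1).choose (s - 1) := by
  have h := count_supset ({a} : Finset (Fin r)) (by simpa using hs)
  simpa [singleton_subset_iff] using h

lemma count_mem2 {x y : Fin r} (hxy : x ≠ y) {s : ℕ} (hs : 2 ≤ s) :
    ((Finset.univ.powersetCard s).filter (fun S => x ∈ S ∧ y ∈ S)).card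
      = (r - 2).choose (s - 2) := by
  have hcard : ({x, y} : Finset (Fin r)).card = 2 := by
    rw [card_insert_of_notMem (by simpa using hxy), card_singleton]
  have h := count_supset ({x, y} : Finset (Fin r)) (hcard.le.trans hs)
  rw [hcard] at h
  rw [← h]
  congr 1
  apply filter_congr
  intro S _
  simp [insert_subset_iff]

end aux

set_option maxHeartbeats 1000000 in
theorem stmt_10 (r s : ℕ) (hs : 0 < s)
    (h1 : 5 * s ^ 3 ≤ r) (h2 : 40 * s ^ 2 ≤ r)
    (S₁ S₂ : Finset (Fin r)) (a : Fin r)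
    (hc₁ : S₁.card = s) (hc₂ : S₂.card = s) (hint : S₁ ∩ S₂ = {a}) :
    (1 - 24 * (s : ℝ) ^ 3 / r) *
        ((((Finset.univ.powersetCard s) ×ˢ (Finset.univ.powersetCard s)).filter
          fun p : Finset (Fin r) × Finset (Fin r) =>
            (p.1 ∩ S₁).Nonempty ∧ (p.1 ∩ S₂).Nonempty ∧
            (p.2 ∩ S₁).Nonempty ∧ (p.2 ∩ S₂).Nonempty).card : ℝ) ≤
      ((((Finset.univ.powersetCard s) ×ˢ (Finset.univ.powersetCard s)).filter
          fun p : Finset (Fin r) × Finset (Fin r) =>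
            p.1 ∩ p.2 = {a} ∧ p.1 ∩ S₁ = {a} ∧ p.1 ∩ S₂ = {a} ∧
            p.2 ∩ S₁ = {a} ∧ p.2 ∩ S₂ = {a}).card : ℝ) := by
  classical
  have ha1 : a ∈ S₁ := by
    have : a ∈ S₁ ∩ S₂ := by rw [hint]; exact mem_singleton_self a
    exact (mem_inter.mp this).1
  have ha2 : a ∈ S₂ := by
    have : a ∈ S₁ ∩ S₂ := by rw [hint]; exact mem_singleton_self a
    exact (mem_inter.mp this).2
  have hr40 : 40 ≤ r := by nlinarith
  have hrpos : (0:ℝ) < r := by positivity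
  set P : Finset (Finset (Fin r)) := Finset.univ.powersetCard s with hPdef
  set G := ((P ×ˢ P).filter
      fun p : Finset (Fin r) × Finset (Fin r) =>
        (p.1 ∩ S₁).Nonempty ∧ (p.1 ∩ S₂).Nonempty ∧
        (p.2 ∩ S₁).Nonempty ∧ (p.2 ∩ S₂).Nonempty) with hGdef
  set B := ((P ×ˢ P).filter
      fun p : Finset (Fin r) × Finset (Fin r) =>
        p.1 ∩ p.2 = {a} ∧ p.1 ∩ S₁ = {a} ∧ p.1 ∩ S₂ = {a} ∧
        p.2 ∩ S₁ = {a} ∧ p.2 ∩ S₂ = {a}) with hBdef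
  have hBsubG : B ⊆ G := by
    intro p hp
    rw [hBdef, mem_filter] at hp
    rw [hGdef, mem_filter]
    obtain ⟨hmem, h1', h2', h3', h4', h5'⟩ := hp
    exact ⟨hmem, by rw [h2']; exact singleton_nonempty a,
      by rw [h3']; exact singleton_nonempty a,
      by rw [h4']; exact singleton_nonempty a,
      by rw [h5']; exact singleton_nonempty a⟩
  -- the key counting bound
  have main : ((G \ B).card : ℝ) * r ≤ 24 * (s:ℝ)^3 * G.card := by
    by_cases hs1 : s = 1
    · -- degenerate case: G ⊆ B, so G \ B = ∅
      have hS1 : S₁ = {a} := by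
        subst hs1
        obtain ⟨x, hx⟩ := card_eq_one.mp hc₁
        rw [hx] at ha1 ⊢
        rw [mem_singleton] at ha1
        rw [ha1]
      have hS2 : S₂ = {a} := by
        subst hs1
        obtain ⟨x, hx⟩ := card_eq_one.mp hc₂
        rw [hx] at ha2 ⊢
        rw [mem_singleton] at ha2
        rw [ha2]
      have hGB : G ⊆ B := by
        intro p hp
        rw [hGdef, mem_filter] at hp
        obtain ⟨hmem, n1, n2, n3, n4⟩ := hp
        have hm := hmem
        rw [Finset.mem_product] at hm
        have hcard1 : p.1.card = s := (mem_powersetCard.mp hm.1).2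
        have hcard2 : p.2.card = s := (mem_powersetCard.mp hm.2).2
        have hp1 : p.1 = {a} := by
          obtain ⟨x, hx⟩ := n1
          rw [hS1, mem_inter, mem_singleton] at hx
          have haP : a ∈ p.1 := hx.2 ▸ hx.1
          have hsub : ({a} : Finset (Fin r)) ⊆ p.1 := singleton_subset_iff.mpr haP
          exact (Finset.eq_of_subset_of_card_le hsub (by rw [hcard1, hs1]; simp)).symm
        have hp2 : p.2 = {a} := by
          obtain ⟨x, hx⟩ := n3
          rw [hS1, mem_inter, mem_singleton] at hx
          have haP : a ∈ p.2 := hx.2 ▸ hx.1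
          have hsub : ({a} : Finset (Fin r)) ⊆ p.2 := singleton_subset_iff.mpr haP
          exact (Finset.eq_of_subset_of_card_le hsub (by rw [hcard2, hs1]; simp)).symm
        rw [hBdef, mem_filter]
        refine ⟨hmem, ?_⟩
        rw [hp1, hp2, hS1, hS2]
        simp
      have : G \ B = ∅ := sdiff_eq_empty_iff_subset.mpr hGB
      rw [this]
      simp
      positivity
    · -- main case: s ≥ 2
      have hs2 : 2 ≤ s := by omega
      have hsr : s ≤ r := by nlinarith
      set c1 := (r-1).choose (s-1) with hc1def
      set c2 := (r-2).choose (s-2) with hc2def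
      have hid : (r-1) * c2 = c1 * (s-1) := by
        have h := Nat.add_one_mul_choose_eq (r-2) (s-2)
        have e1 : r - 2 + 1 = r - 1 := by omega
        have e2 : s - 2 + 1 = s - 1 := by omega
        rw [e1, e2] at h
        exact h
      have hrc2 : r * c2 ≤ 2 * (s * c1) := by
        have hr2 : r ≤ 2*(r-1) := by omega
        calc r * c2 ≤ (2*(r-1)) * c2 := Nat.mul_le_mul_right _ hr2
          _ = 2*((r-1)*c2) := by ring
          _ = 2*(c1*(s-1)) := by rw [hid]
          _ ≤ 2*(c1*s) := by gcongr; omega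
          _ = 2*(s*c1) := by ring
      have hA : s^2 * c2 ≤ c1 := by
        have hs3r : s^3 + 1 ≤ r := by nlinarith
        have h' : (r-1) * (s^2*c2) ≤ (r-1) * c1 := by
          calc (r-1)*(s^2*c2) = s^2*((r-1)*c2) := by ring
            _ = s^2*(c1*(s-1)) := by rw [hid]
            _ ≤ s^2*(c1*s) := by gcongr; omega
            _ = s^3*c1 := by ring
            _ ≤ (r-1)*c1 := by gcongr; omega
        exact Nat.le_of_mul_le_mul_left h' (by omega)
      have hPa : (P.filter (fun S => a ∈ S)).card = c1 := count_mem a hs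
      have hPxy : ∀ x y : Fin r, x ≠ y →
          (P.filter (fun S => x ∈ S ∧ y ∈ S)).card = c2 :=
        fun x y hxy => count_mem2 hxy hs2
      have hne : ∀ x ∈ S₁, x ≠ a → ∀ y ∈ S₂, y ≠ a → x ≠ y := by
        intro x hx hxa y hy hya h
        subst h
        have : x ∈ S₁ ∩ S₂ := mem_inter.mpr ⟨hx, hy⟩
        rw [hint, mem_singleton] at this
        exact hxa this
      -- lower bound on G
      have hGge : c1 * c1 ≤ G.card := by
        have hsub : (P.filter (fun S => a ∈ S)) ×ˢ (P.filter (fun S => a ∈ S)) ⊆ G := by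
          intro p hp
          rw [Finset.mem_product, mem_filter, mem_filter] at hp
          rw [hGdef, mem_filter, Finset.mem_product]
          exact ⟨⟨hp.1.1, hp.2.1⟩, ⟨a, mem_inter.mpr ⟨hp.1.2, ha1⟩⟩,
            ⟨a, mem_inter.mpr ⟨hp.1.2, ha2⟩⟩, ⟨a, mem_inter.mpr ⟨hp.2.2, ha1⟩⟩,
            ⟨a, mem_inter.mpr ⟨hp.2.2, ha2⟩⟩⟩
        have := card_le_card hsub
        rwa [card_product, hPa] at this
      -- X : bad single sets avoiding a
      set X := P.filter (fun S => a ∉ S ∧ (S ∩ S₁).Nonempty ∧ (S ∩ S₂).Nonempty) with hXdef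
      have hX : X.card ≤ s^2 * c2 := by
        have hsub : X ⊆ ((S₁.erase a) ×ˢ (S₂.erase a)).biUnion
            (fun q => P.filter (fun S => q.1 ∈ S ∧ q.2 ∈ S)) := by
          intro S hS
          rw [hXdef, mem_filter] at hS
          obtain ⟨hSP, hna, ⟨x, hx⟩, ⟨y, hy⟩⟩ := hS
          rw [mem_inter] at hx hy
          have hxa : x ≠ a := fun h => hna (h ▸ hx.1)
          have hya : y ≠ a := fun h => hna (h ▸ hy.1)
          rw [mem_biUnion]
          refine ⟨(x, y), ?_, ?_⟩
          · rw [Finset.mem_product, mem_erase, mem_erase]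
            exact ⟨⟨hxa, hx.2⟩, ⟨hya, hy.2⟩⟩
          · rw [mem_filter]
            exact ⟨hSP, hx.1, hy.1⟩
        calc X.card ≤ _ := card_le_card hsub
          _ ≤ ∑ q ∈ (S₁.erase a) ×ˢ (S₂.erase a),
              (P.filter (fun S => q.1 ∈ S ∧ q.2 ∈ S)).card := card_biUnion_le
          _ ≤ ((S₁.erase a) ×ˢ (S₂.erase a)).card • c2 := by
              apply sum_le_card_nsmul
              intro q hq
              rw [Finset.mem_product, mem_erase, mem_erase] at hq
              exact le_of_eq (hPxy q.1 q.2 (hne q.1 hq.1.2 hq.1.1 q.2 hq.2.2 hq.2.1))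
          _ = (s-1) * (s-1) * c2 := by
              rw [smul_eq_mul, card_product, card_erase_of_mem ha1,
                card_erase_of_mem ha2, hc₁, hc₂]
          _ ≤ s^2 * c2 := by
              have h' : (s-1)*(s-1) ≤ s^2 := by
                have := Nat.sub_le s 1
                nlinarith
              exact Nat.mul_le_mul_right _ h'
      -- Y : sets meeting both
      set Y := P.filter (fun S => (S ∩ S₁).Nonempty ∧ (S ∩ S₂).Nonempty) with hYdef
      have hY : Y.card ≤ c1 + s^2*c2 := by
        have hsub : Y ⊆ (P.filter (fun S => a ∈ S)) ∪ X := by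
          intro S hS
          rw [hYdef, mem_filter] at hS
          rw [mem_union, mem_filter, hXdef, mem_filter]
          by_cases h : a ∈ S
          · exact Or.inl ⟨hS.1, h⟩
          · exact Or.inr ⟨hS.1, h, hS.2⟩
        calc Y.card ≤ _ := card_le_card hsub
          _ ≤ _ + _ := card_union_le _ _
          _ ≤ c1 + s^2*c2 := by rw [hPa]; exact Nat.add_le_add_left hX _
      -- the seven bad classes
      set Q1 := (P ×ˢ P).filter (fun p : Finset (Fin r) × Finset (Fin r) =>
        (a ∉ p.1 ∧ (p.1 ∩ S₁).Nonempty ∧ (p.1 ∩ S₂).Nonempty) ∧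
        ((p.2 ∩ S₁).Nonempty ∧ (p.2 ∩ S₂).Nonempty)) with hQ1def
      have hQ1 : Q1.card ≤ (s^2*c2) * (c1 + s^2*c2) := by
        have hsub : Q1 ⊆ X ×ˢ Y := by
          intro p hp
          rw [hQ1def, mem_filter, Finset.mem_product] at hp
          rw [Finset.mem_product]
          constructor
          · rw [hXdef, mem_filter]; exact ⟨hp.1.1, hp.2.1⟩
          · rw [hYdef, mem_filter]; exact ⟨hp.1.2, hp.2.2⟩
        have := card_le_card hsub
        rw [card_product] at this
        exact le_trans this (Nat.mul_le_mul hX hY)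
      set Q2 := (P ×ˢ P).filter (fun p : Finset (Fin r) × Finset (Fin r) =>
        ((p.1 ∩ S₁).Nonempty ∧ (p.1 ∩ S₂).Nonempty) ∧
        (a ∉ p.2 ∧ (p.2 ∩ S₁).Nonempty ∧ (p.2 ∩ S₂).Nonempty)) with hQ2def
      have hQ2 : Q2.card ≤ (c1 + s^2*c2) * (s^2*c2) := by
        have hsub : Q2 ⊆ Y ×ˢ X := by
          intro p hp
          rw [hQ2def, mem_filter, Finset.mem_product] at hp
          rw [Finset.mem_product]
          constructor
          · rw [hYdef, mem_filter]; exact ⟨hp.1.1, hp.2.1⟩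
          · rw [hXdef, mem_filter]; exact ⟨hp.1.2, hp.2.2⟩
        have := card_le_card hsub
        rw [card_product] at this
        exact le_trans this (Nat.mul_le_mul hY hX)
      set Q3 := (P ×ˢ P).filter (fun p : Finset (Fin r) × Finset (Fin r) =>
        a ∈ p.2 ∧ ∃ b ∈ S₁, b ≠ a ∧ b ∈ p.1 ∧ a ∈ p.1) with hQ3def
      have hQ3 : Q3.card ≤ s * (c2 * c1) := by
        have hsub : Q3 ⊆ (S₁.erase a).biUnion (fun b =>
            (P.filter (fun S => a ∈ S ∧ b ∈ S)) ×ˢ (P.filter (fun S => a ∈ S))) := by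
          intro p hp
          rw [hQ3def, mem_filter, Finset.mem_product] at hp
          obtain ⟨⟨hp1, hp2⟩, ha2', b, hbS, hba, hb1, ha1'⟩ := hp
          rw [mem_biUnion]
          refine ⟨b, mem_erase.mpr ⟨hba, hbS⟩, ?_⟩
          rw [Finset.mem_product, mem_filter, mem_filter]
          exact ⟨⟨hp1, ha1', hb1⟩, hp2, ha2'⟩
        calc Q3.card ≤ _ := card_le_card hsub
          _ ≤ ∑ b ∈ S₁.erase a, _ := card_biUnion_le
          _ ≤ (S₁.erase a).card • (c2 * c1) := by
              apply sum_le_card_nsmul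
              intro b hb
              rw [mem_erase] at hb
              rw [card_product, hPa, hPxy a b (Ne.symm hb.1)]
          _ = (s-1) * (c2*c1) := by rw [smul_eq_mul, card_erase_of_mem ha1, hc₁]
          _ ≤ s * (c2*c1) := Nat.mul_le_mul_right _ (Nat.sub_le s 1)
      set Q4 := (P ×ˢ P).filter (fun p : Finset (Fin r) × Finset (Fin r) =>
        a ∈ p.2 ∧ ∃ b ∈ S₂, b ≠ a ∧ b ∈ p.1 ∧ a ∈ p.1) with hQ4def
      have hQ4 : Q4.card ≤ s * (c2 * c1) := by
        have hsub : Q4 ⊆ (S₂.erase a).biUnion (fun b =>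
            (P.filter (fun S => a ∈ S ∧ b ∈ S)) ×ˢ (P.filter (fun S => a ∈ S))) := by
          intro p hp
          rw [hQ4def, mem_filter, Finset.mem_product] at hp
          obtain ⟨⟨hp1, hp2⟩, ha2', b, hbS, hba, hb1, ha1'⟩ := hp
          rw [mem_biUnion]
          refine ⟨b, mem_erase.mpr ⟨hba, hbS⟩, ?_⟩
          rw [Finset.mem_product, mem_filter, mem_filter]
          exact ⟨⟨hp1, ha1', hb1⟩, hp2, ha2'⟩
        calc Q4.card ≤ _ := card_le_card hsub
          _ ≤ ∑ b ∈ S₂.erase a, _ := card_biUnion_le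
          _ ≤ (S₂.erase a).card • (c2 * c1) := by
              apply sum_le_card_nsmul
              intro b hb
              rw [mem_erase] at hb
              rw [card_product, hPa, hPxy a b (Ne.symm hb.1)]
          _ = (s-1) * (c2*c1) := by rw [smul_eq_mul, card_erase_of_mem ha2, hc₂]
          _ ≤ s * (c2*c1) := Nat.mul_le_mul_right _ (Nat.sub_le s 1)
      set Q5 := (P ×ˢ P).filter (fun p : Finset (Fin r) × Finset (Fin r) =>
        a ∈ p.1 ∧ ∃ b ∈ S₁, b ≠ a ∧ b ∈ p.2 ∧ a ∈ p.2) with hQ5def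
      have hQ5 : Q5.card ≤ s * (c1 * c2) := by
        have hsub : Q5 ⊆ (S₁.erase a).biUnion (fun b =>
            (P.filter (fun S => a ∈ S)) ×ˢ (P.filter (fun S => a ∈ S ∧ b ∈ S))) := by
          intro p hp
          rw [hQ5def, mem_filter, Finset.mem_product] at hp
          obtain ⟨⟨hp1, hp2⟩, ha1', b, hbS, hba, hb2, ha2'⟩ := hp
          rw [mem_biUnion]
          refine ⟨b, mem_erase.mpr ⟨hba, hbS⟩, ?_⟩
          rw [Finset.mem_product, mem_filter, mem_filter]
          exact ⟨⟨hp1, ha1'⟩, hp2, ha2', hb2⟩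
        calc Q5.card ≤ _ := card_le_card hsub
          _ ≤ ∑ b ∈ S₁.erase a, _ := card_biUnion_le
          _ ≤ (S₁.erase a).card • (c1 * c2) := by
              apply sum_le_card_nsmul
              intro b hb
              rw [mem_erase] at hb
              rw [card_product, hPa, hPxy a b (Ne.symm hb.1)]
          _ = (s-1) * (c1*c2) := by rw [smul_eq_mul, card_erase_of_mem ha1, hc₁]
          _ ≤ s * (c1*c2) := Nat.mul_le_mul_right _ (Nat.sub_le s 1)
      set Q6 := (P ×ˢ P).filter (fun p : Finset (Fin r) × Finset (Fin r) =>
        a ∈ p.1 ∧ ∃ b ∈ S₂, b ≠ a ∧ b ∈ p.2 ∧ a ∈ p.2) with hQ6def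
      have hQ6 : Q6.card ≤ s * (c1 * c2) := by
        have hsub : Q6 ⊆ (S₂.erase a).biUnion (fun b =>
            (P.filter (fun S => a ∈ S)) ×ˢ (P.filter (fun S => a ∈ S ∧ b ∈ S))) := by
          intro p hp
          rw [hQ6def, mem_filter, Finset.mem_product] at hp
          obtain ⟨⟨hp1, hp2⟩, ha1', b, hbS, hba, hb2, ha2'⟩ := hp
          rw [mem_biUnion]
          refine ⟨b, mem_erase.mpr ⟨hba, hbS⟩, ?_⟩
          rw [Finset.mem_product, mem_filter, mem_filter]
          exact ⟨⟨hp1, ha1'⟩, hp2, ha2', hb2⟩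
        calc Q6.card ≤ _ := card_le_card hsub
          _ ≤ ∑ b ∈ S₂.erase a, _ := card_biUnion_le
          _ ≤ (S₂.erase a).card • (c1 * c2) := by
              apply sum_le_card_nsmul
              intro b hb
              rw [mem_erase] at hb
              rw [card_product, hPa, hPxy a b (Ne.symm hb.1)]
          _ = (s-1) * (c1*c2) := by rw [smul_eq_mul, card_erase_of_mem ha2, hc₂]
          _ ≤ s * (c1*c2) := Nat.mul_le_mul_right _ (Nat.sub_le s 1)
      set Q7 := (P ×ˢ P).filter (fun p : Finset (Fin r) × Finset (Fin r) =>
        ∃ b, b ≠ a ∧ (b ∈ p.1 ∧ a ∈ p.1) ∧ (b ∈ p.2 ∧ a ∈ p.2)) with hQ7def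
      have hQ7 : Q7.card ≤ r * (c2 * c2) := by
        have hsub : Q7 ⊆ (Finset.univ.erase a).biUnion (fun b =>
            (P.filter (fun S => a ∈ S ∧ b ∈ S)) ×ˢ (P.filter (fun S => a ∈ S ∧ b ∈ S))) := by
          intro p hp
          rw [hQ7def, mem_filter, Finset.mem_product] at hp
          obtain ⟨⟨hp1, hp2⟩, b, hba, ⟨hb1, ha1'⟩, hb2, ha2'⟩ := hp
          rw [mem_biUnion]
          refine ⟨b, mem_erase.mpr ⟨hba, mem_univ b⟩, ?_⟩
          rw [Finset.mem_product, mem_filter, mem_filter]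
          exact ⟨⟨hp1, ha1', hb1⟩, hp2, ha2', hb2⟩
        calc Q7.card ≤ _ := card_le_card hsub
          _ ≤ ∑ b ∈ Finset.univ.erase a, _ := card_biUnion_le
          _ ≤ (Finset.univ.erase a).card • (c2 * c2) := by
              apply sum_le_card_nsmul
              intro b hb
              rw [mem_erase] at hb
              rw [card_product, hPxy a b (Ne.symm hb.1)]
          _ = (r-1) * (c2*c2) := by
              rw [smul_eq_mul, card_erase_of_mem (mem_univ a), card_univ, Fintype.card_fin]
          _ ≤ r * (c2*c2) := Nat.mul_le_mul_right _ (Nat.sub_le r 1)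
      -- decomposition of the bad set
      have key : ∀ I : Finset (Fin r), a ∈ I → I ≠ {a} → ∃ b ∈ I, b ≠ a := by
        intro I haI hne'
        have hss : {a} ⊂ I :=
          Finset.ssubset_iff_subset_ne.mpr ⟨singleton_subset_iff.mpr haI, fun h => hne' h.symm⟩
        obtain ⟨b, hbI, hb⟩ := exists_of_ssubset hss
        exact ⟨b, hbI, by simpa using hb⟩
      have hDsub : G \ B ⊆ Q1 ∪ Q2 ∪ Q3 ∪ Q4 ∪ Q5 ∪ Q6 ∪ Q7 := by
        intro p hp
        rw [mem_sdiff] at hp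
        obtain ⟨hpG, hpB⟩ := hp
        rw [hGdef, mem_filter] at hpG
        obtain ⟨hmem, n1, n2, n3, n4⟩ := hpG
        simp only [mem_union]
        by_cases ha1' : a ∈ p.1
        · by_cases ha2' : a ∈ p.2
          · have hcon : ¬(p.1 ∩ p.2 = {a} ∧ p.1 ∩ S₁ = {a} ∧ p.1 ∩ S₂ = {a} ∧
                p.2 ∩ S₁ = {a} ∧ p.2 ∩ S₂ = {a}) := by
              intro h
              exact absurd (by rw [hBdef, mem_filter]; exact ⟨hmem, h⟩) hpB
            by_cases e2 : p.1 ∩ S₁ = {a}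
            · by_cases e3 : p.1 ∩ S₂ = {a}
              · by_cases e4 : p.2 ∩ S₁ = {a}
                · by_cases e5 : p.2 ∩ S₂ = {a}
                  · have e1 : p.1 ∩ p.2 ≠ {a} := fun h => hcon ⟨h, e2, e3, e4, e5⟩
                    obtain ⟨b, hb, hba⟩ := key _ (mem_inter.mpr ⟨ha1', ha2'⟩) e1
                    rw [mem_inter] at hb
                    have hQ : p ∈ Q7 := by
                      rw [hQ7def, mem_filter]
                      exact ⟨hmem, b, hba, ⟨hb.1, ha1'⟩, hb.2, ha2'⟩
                    exact Or.inr hQ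
                  · obtain ⟨b, hb, hba⟩ := key _ (mem_inter.mpr ⟨ha2', ha2⟩) e5
                    rw [mem_inter] at hb
                    have hQ : p ∈ Q6 := by
                      rw [hQ6def, mem_filter]
                      exact ⟨hmem, ha1', b, hb.2, hba, hb.1, ha2'⟩
                    exact Or.inl (Or.inr hQ)
                · obtain ⟨b, hb, hba⟩ := key _ (mem_inter.mpr ⟨ha2', ha1⟩) e4
                  rw [mem_inter] at hb
                  have hQ : p ∈ Q5 := by
                    rw [hQ5def, mem_filter]
                    exact ⟨hmem, ha1', b, hb.2, hba, hb.1, ha2'⟩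
                  exact Or.inl (Or.inl (Or.inr hQ))
              · obtain ⟨b, hb, hba⟩ := key _ (mem_inter.mpr ⟨ha1', ha2⟩) e3
                rw [mem_inter] at hb
                have hQ : p ∈ Q4 := by
                  rw [hQ4def, mem_filter]
                  exact ⟨hmem, ha2', b, hb.2, hba, hb.1, ha1'⟩
                exact Or.inl (Or.inl (Or.inl (Or.inr hQ)))
            · obtain ⟨b, hb, hba⟩ := key _ (mem_inter.mpr ⟨ha1', ha1⟩) e2
              rw [mem_inter] at hb
              have hQ : p ∈ Q3 := by
                rw [hQ3def, mem_filter]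
                exact ⟨hmem, ha2', b, hb.2, hba, hb.1, ha1'⟩
              exact Or.inl (Or.inl (Or.inl (Or.inl (Or.inr hQ))))
          · have hQ : p ∈ Q2 := by
              rw [hQ2def, mem_filter]
              exact ⟨hmem, ⟨n1, n2⟩, ha2', n3, n4⟩
            exact Or.inl (Or.inl (Or.inl (Or.inl (Or.inl (Or.inr hQ)))))
        · have hQ : p ∈ Q1 := by
            rw [hQ1def, mem_filter]
            exact ⟨hmem, ⟨ha1', n1, n2⟩, n3, n4⟩
          exact Or.inl (Or.inl (Or.inl (Or.inl (Or.inl (Or.inl hQ)))))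
      have hDcard : (G \ B).card ≤ Q1.card + Q2.card + Q3.card + Q4.card
          + Q5.card + Q6.card + Q7.card := by
        refine le_trans (card_le_card hDsub) ?_
        calc (Q1 ∪ Q2 ∪ Q3 ∪ Q4 ∪ Q5 ∪ Q6 ∪ Q7).card
            ≤ (Q1 ∪ Q2 ∪ Q3 ∪ Q4 ∪ Q5 ∪ Q6).card + Q7.card := card_union_le _ _
          _ ≤ (Q1 ∪ Q2 ∪ Q3 ∪ Q4 ∪ Q5).card + Q6.card + Q7.card :=
              Nat.add_le_add_right (card_union_le _ _) _
          _ ≤ (Q1 ∪ Q2 ∪ Q3 ∪ Q4).card + Q5.card + Q6.card + Q7.card :=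
              Nat.add_le_add_right (Nat.add_le_add_right (card_union_le _ _) _) _
          _ ≤ (Q1 ∪ Q2 ∪ Q3).card + Q4.card + Q5.card + Q6.card + Q7.card :=
              Nat.add_le_add_right (Nat.add_le_add_right (Nat.add_le_add_right
                (card_union_le _ _) _) _) _
          _ ≤ (Q1 ∪ Q2).card + Q3.card + Q4.card + Q5.card + Q6.card + Q7.card :=
              Nat.add_le_add_right (Nat.add_le_add_right (Nat.add_le_add_right
                (Nat.add_le_add_right (card_union_le _ _) _) _) _) _
          _ ≤ Q1.card + Q2.card + Q3.card + Q4.card + Q5.card + Q6.card + Q7.card :=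
              Nat.add_le_add_right (Nat.add_le_add_right (Nat.add_le_add_right
                (Nat.add_le_add_right (Nat.add_le_add_right (card_union_le _ _) _) _) _) _) _
      have hDN : (G \ B).card ≤ (s^2*c2)*(c1+s^2*c2) + (c1+s^2*c2)*(s^2*c2)
          + s*(c2*c1) + s*(c2*c1) + s*(c1*c2) + s*(c1*c2) + r*(c2*c2) :=
        le_trans hDcard (by
          exact Nat.add_le_add (Nat.add_le_add (Nat.add_le_add (Nat.add_le_add
            (Nat.add_le_add (Nat.add_le_add hQ1 hQ2) hQ3) hQ4) hQ5) hQ6) hQ7)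
      -- now pass to ℝ
      have hDNR : ((G \ B).card : ℝ) ≤ ((s:ℝ)^2*c2)*(c1+(s:ℝ)^2*c2)
          + ((c1:ℝ)+(s:ℝ)^2*c2)*((s:ℝ)^2*c2) + (s:ℝ)*((c2:ℝ)*c1) + (s:ℝ)*((c2:ℝ)*c1)
          + (s:ℝ)*((c1:ℝ)*c2) + (s:ℝ)*((c1:ℝ)*c2) + (r:ℝ)*((c2:ℝ)*c2) := by
        exact_mod_cast hDN
      have hAR : (s:ℝ)^2*(c2:ℝ) ≤ (c1:ℝ) := by exact_mod_cast hA
      have hrc2R : (r:ℝ)*(c2:ℝ) ≤ 2*((s:ℝ)*(c1:ℝ)) := by exact_mod_cast hrc2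
      have hGgeR : (c1:ℝ)*(c1:ℝ) ≤ (G.card:ℝ) := by exact_mod_cast hGge
      have hs1R : (1:ℝ) ≤ (s:ℝ) := by exact_mod_cast hs
      have hc1nn : (0:ℝ) ≤ (c1:ℝ) := by positivity
      have hc2nn : (0:ℝ) ≤ (c2:ℝ) := by positivity
      have hsnn : (0:ℝ) ≤ (s:ℝ) := by positivity
      have hrnn : (0:ℝ) ≤ (r:ℝ) := by positivity
      have t1 : ((s:ℝ)*c1*(s:ℝ))*((r:ℝ)*c2) ≤ ((s:ℝ)*c1*(s:ℝ))*(2*((s:ℝ)*c1)) :=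
        mul_le_mul_of_nonneg_left hrc2R (by positivity)
      have t2 : (((s:ℝ)^2*c2)*(s:ℝ)^2)*((r:ℝ)*c2) ≤ ((c1:ℝ)*(s:ℝ)^2)*(2*((s:ℝ)*c1)) :=
        mul_le_mul (mul_le_mul_of_nonneg_right hAR (by positivity)) hrc2R
          (by positivity) (by positivity)
      have t3 : ((s:ℝ)*c1)*((r:ℝ)*c2) ≤ ((s:ℝ)*c1)*(2*((s:ℝ)*c1)) :=
        mul_le_mul_of_nonneg_left hrc2R (by positivity)
      have t4 : ((r:ℝ)*c2)*((r:ℝ)*c2) ≤ (2*((s:ℝ)*c1))*(2*((s:ℝ)*c1)) :=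
        mul_le_mul hrc2R hrc2R (by positivity) (by positivity)
      have hs23 : (s:ℝ)^2*((c1:ℝ)*c1) ≤ (s:ℝ)^3*((c1:ℝ)*c1) := by nlinarith
      have hgc : (s:ℝ)^3*((c1:ℝ)*c1) ≤ (s:ℝ)^3*(G.card:ℝ) :=
        mul_le_mul_of_nonneg_left hGgeR (by positivity)
      have hDE : ((G \ B).card : ℝ) * r ≤ (((s:ℝ)^2*c2)*(c1+(s:ℝ)^2*c2)
          + ((c1:ℝ)+(s:ℝ)^2*c2)*((s:ℝ)^2*c2) + (s:ℝ)*((c2:ℝ)*c1) + (s:ℝ)*((c2:ℝ)*c1)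
          + (s:ℝ)*((c1:ℝ)*c2) + (s:ℝ)*((c1:ℝ)*c2) + (r:ℝ)*((c2:ℝ)*c2)) * r :=
        mul_le_mul_of_nonneg_right hDNR hrnn
      nlinarith [t1, t2, t3, t4, hs23, hgc, hDE,
        mul_nonneg (mul_nonneg hsnn hc1nn) hc2nn,
        mul_nonneg hc1nn hc2nn, mul_nonneg hc2nn hc2nn]
  -- conclude
  have hcards : ((G \ B).card : ℕ) + B.card = G.card := card_sdiff_add_card_eq_card hBsubG
  have hBG : (B.card : ℝ) = G.card - (G \ B).card := by
    have := congrArg (fun n : ℕ => (n : ℝ)) hcards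
    push_cast at this
    linarith
  rw [hBG]
  have hdiv : ((G \ B).card : ℝ) ≤ 24 * (s:ℝ)^3 * G.card / r := by
    rw [le_div_iff₀ hrpos]; exact main
  have heq : (1 - 24 * (s:ℝ) ^ 3 / r) * G.card
      = (G.card : ℝ) - 24 * (s:ℝ)^3 * G.card / r := by ring
  linarith [hdiv, heq.le]
end

section
/- For positive integers s, r with s ≤ r/2 and s² ≤ r/40: C(r-2s+1, s-1)·C(r-3s+2, s-1) / C(r,s)² ≥ (s²/r²)·(1 - 20s²/r). -/
open Finset

lemma cast_descF (n k : ℕ) (h : k ≤ n) :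
    (n.descFactorial k : ℝ) = ∏ i ∈ Finset.range k, ((n : ℝ) - i) := by
  rw [Nat.descFactorial_eq_prod_range]
  push_cast
  refine Finset.prod_congr rfl fun i hi => ?_
  have hi' := Finset.mem_range.mp hi
  rw [Nat.cast_sub (by omega)]

lemma prod_lower (k : ℕ) (x y c : ℝ) (hc : 0 ≤ c)
    (h : ∀ i ∈ Finset.range k, c * (x - i) ≤ y - i)
    (hnn : ∀ i ∈ Finset.range k, 0 ≤ c * (x - i)) :
    c ^ k * ∏ i ∈ Finset.range k, (x - i) ≤ ∏ i ∈ Finset.range k, (y - i) := by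
  calc c ^ k * ∏ i ∈ Finset.range k, (x - i)
      = ∏ i ∈ Finset.range k, c * (x - i) := by
        rw [Finset.prod_mul_distrib, Finset.prod_const, Finset.card_range]
    _ ≤ _ := Finset.prod_le_prod hnn h

set_option maxHeartbeats 1600000

theorem stmt_11 (s r : ℕ) (hs : 0 < s) (h2s : 2 * s ≤ r) (h40 : 40 * s ^ 2 ≤ r) :
    ((r - 2 * s + 1).choose (s - 1) : ℝ) * ((r - 3 * s + 2).choose (s - 1) : ℝ) /
        ((r.choose s : ℝ)) ^ 2 ≥
      ((s : ℝ) ^ 2 / (r : ℝ) ^ 2) * (1 - 20 * (s : ℝ) ^ 2 / r) := by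
  obtain ⟨k, rfl⟩ : ∃ k, s = k + 1 := ⟨s - 1, by omega⟩
  -- basic natural number facts
  have h40' : 40 * ((k + 1) * (k + 1)) ≤ r := by
    have := h40; rw [pow_two] at this; omega
  have hk1 : k + 1 ≤ (k + 1) * (k + 1) := Nat.le_mul_of_pos_left _ (by omega)
  have h10 : 10 * (k + 1) ≤ r := le_trans (Nat.mul_le_mul (by norm_num) hk1) h40'
  have hkr : k + 1 ≤ r := by omega
  have rpos : (0 : ℝ) < r := by exact_mod_cast (by omega : (0:ℕ) < r)
  have hkR : 40 * (((k : ℝ) + 1) * ((k : ℝ) + 1)) ≤ r := by exact_mod_cast h40'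
  have h10R : 10 * ((k : ℝ) + 1) ≤ r := by exact_mod_cast h10
  -- notation
  set a : ℝ := (k : ℝ) + 1 with ha
  have hapos : 0 < a := by positivity
  -- descFactorial values as products
  have hE : ((r.descFactorial k : ℕ) : ℝ) = ∏ i ∈ Finset.range k, ((r : ℝ) - i) :=
    cast_descF r k (by omega)
  have hD1 : (((r - 2 * (k + 1) + 1).descFactorial k : ℕ) : ℝ)
      = ∏ i ∈ Finset.range k, (((r : ℝ) - 2 * a + 1) - i) := by
    rw [cast_descF _ k (by omega)]
    refine Finset.prod_congr rfl fun i hi => ?_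
    have : ((r - 2 * (k + 1) + 1 : ℕ) : ℝ) = (r : ℝ) - 2 * a + 1 := by
      have : (r : ℝ) - 2 * a + 1 = ((r - 2 * (k+1) + 1 : ℕ) : ℝ) := by
        push_cast [Nat.cast_sub (by omega : 2 * (k+1) ≤ r)]; ring
      linarith [this]
    rw [this]
  have hD2 : (((r - 3 * (k + 1) + 2).descFactorial k : ℕ) : ℝ)
      = ∏ i ∈ Finset.range k, (((r : ℝ) - 3 * a + 2) - i) := by
    rw [cast_descF _ k (by omega)]
    refine Finset.prod_congr rfl fun i hi => ?_
    have : ((r - 3 * (k + 1) + 2 : ℕ) : ℝ) = (r : ℝ) - 3 * a + 2 := by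
      push_cast [Nat.cast_sub (by omega : 3 * (k+1) ≤ r)]; ring
    rw [this]
  set E : ℝ := ∏ i ∈ Finset.range k, ((r : ℝ) - i) with hEdef
  set D1 : ℝ := ∏ i ∈ Finset.range k, (((r : ℝ) - 2 * a + 1) - i) with hD1def
  set D2 : ℝ := ∏ i ∈ Finset.range k, (((r : ℝ) - 3 * a + 2) - i) with hD2def
  have hEpos : 0 < E := by
    refine Finset.prod_pos fun i hi => ?_
    have hi' := Finset.mem_range.mp hi
    have : (i : ℝ) < r := by
      exact_mod_cast (by omega : i < r)
    linarith
  -- the two ratio bounds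
  set c1 : ℝ := ((r : ℝ) - 4 * a) / r with hc1
  set c2 : ℝ := ((r : ℝ) - 6 * a) / r with hc2
  have hc1nn : 0 ≤ c1 := by
    apply div_nonneg _ (le_of_lt rpos); linarith [h10R, hapos]
  have hc2nn : 0 ≤ c2 := by
    apply div_nonneg _ (le_of_lt rpos); linarith [h10R, hapos]
  have key1 : c1 ^ k * E ≤ D1 := by
    apply prod_lower k _ _ _ hc1nn
    · intro i hi
      have hi' : (i : ℝ) < k := by exact_mod_cast Finset.mem_range.mp hi
      rw [hc1, div_mul_eq_mul_div, div_le_iff₀ rpos]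
      have hia : a * (i:ℝ) ≤ a * a := by
        apply mul_le_mul_of_nonneg_left _ hapos.le
        rw [ha]; linarith
      linarith [hia, mul_nonneg hapos.le rpos.le, hkR]
    · intro i hi
      have hi' : (i : ℝ) < k := by exact_mod_cast Finset.mem_range.mp hi
      apply mul_nonneg hc1nn
      linarith [h10R]
  have key2 : c2 ^ k * E ≤ D2 := by
    apply prod_lower k _ _ _ hc2nn
    · intro i hi
      have hi' : (i : ℝ) < k := by exact_mod_cast Finset.mem_range.mp hi
      rw [hc2, div_mul_eq_mul_div, div_le_iff₀ rpos]
      have hia : a * (i:ℝ) ≤ a * a := by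
        apply mul_le_mul_of_nonneg_left _ hapos.le
        rw [ha]; linarith
      linarith [hia, mul_nonneg hapos.le rpos.le, hkR]
    · intro i hi
      have hi' : (i : ℝ) < k := by exact_mod_cast Finset.mem_range.mp hi
      apply mul_nonneg hc2nn
      linarith [h10R]
  -- Bernoulli step
  have hbase : (1 : ℝ) - 10 * a / r ≤ c1 * c2 := by
    have hcc : c1 * c2 = 1 - 10 * a / r + 24 * (a / r) ^ 2 := by
      rw [hc1, hc2]; field_simp; ring
    have : (0:ℝ) ≤ 24 * (a / r) ^ 2 := by positivity
    rw [hcc]; linarith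
  have hbase0 : (0 : ℝ) ≤ 1 - 10 * a / r := by
    rw [sub_nonneg, div_le_one rpos]; linarith
  clear_value a E D1 D2 c1 c2
  have hbern : (1 : ℝ) - 10 * a * k / r ≤ (1 - 10 * a / r) ^ k := by
    have hx1 : 10 * a / r ≤ 1 := by rw [div_le_one rpos]; linarith
    have h2le : (-2:ℝ) ≤ -(10 * a / r) := by linarith
    have hb := one_add_mul_le_pow h2le k
    rw [← sub_eq_add_neg] at hb
    calc (1 : ℝ) - 10 * a * k / r = 1 + (k:ℝ) * (-(10 * a / r)) := by ring
      _ ≤ (1 - 10 * a / r) ^ k := hb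
  have hpow : (1 : ℝ) - 10 * a * k / r ≤ (c1 * c2) ^ k :=
    le_trans hbern (pow_le_pow_left₀ hbase0 hbase k)
  have hfinal0 : (1 : ℝ) - 20 * a ^ 2 / r ≤ 1 - 10 * a * k / r := by
    have h' : 10 * a * (k:ℝ) / r ≤ 20 * a ^ 2 / r := by
      rw [div_le_div_iff_of_pos_right rpos, pow_two]
      have hak : a * (k:ℝ) ≤ a * a := by
        apply mul_le_mul_of_nonneg_left _ hapos.le
        rw [ha]; linarith
      linarith [hak, mul_nonneg hapos.le hapos.le]
    linarith
  have hq0 : (0 : ℝ) ≤ 1 - 20 * a ^ 2 / r := by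
    rw [sub_nonneg, div_le_one rpos, pow_two]
    linarith [hkR, mul_nonneg hapos.le hapos.le]
  have key : (1 - 20 * a ^ 2 / r) * E ^ 2 ≤ D1 * D2 := by
    have h1 : (1 - 20 * a ^ 2 / r) * E ^ 2 ≤ (c1 * c2) ^ k * E ^ 2 := by
      apply mul_le_mul_of_nonneg_right _ (sq_nonneg E)
      exact le_trans hfinal0 hpow
    have h2 : (c1 * c2) ^ k * E ^ 2 = (c1 ^ k * E) * (c2 ^ k * E) := by ring
    have h3 : (c1 ^ k * E) * (c2 ^ k * E) ≤ D1 * D2 := by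
      apply mul_le_mul key1 key2 (mul_nonneg (pow_nonneg hc2nn k) hEpos.le)
      exact le_trans (mul_nonneg (pow_nonneg hc1nn k) hEpos.le) key1
    linarith
  -- rewrite the choose values
  have hfacpos : (0:ℝ) < (Nat.factorial k : ℝ) := by exact_mod_cast Nat.factorial_pos k
  have hch1 : ((r - 2 * (k+1) + 1).choose k : ℝ) = D1 / (Nat.factorial k : ℝ) := by
    have h := Nat.descFactorial_eq_factorial_mul_choose (r - 2 * (k+1) + 1) k
    have h' : (((r - 2 * (k+1) + 1).descFactorial k : ℕ) : ℝ)
        = (Nat.factorial k : ℝ) * ((r - 2 * (k+1) + 1).choose k : ℝ) := by exact_mod_cast h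
    rw [hD1] at h'
    rw [eq_div_iff hfacpos.ne']
    linarith [h']
  have hch2 : ((r - 3 * (k+1) + 2).choose k : ℝ) = D2 / (Nat.factorial k : ℝ) := by
    have h := Nat.descFactorial_eq_factorial_mul_choose (r - 3 * (k+1) + 2) k
    have h' : (((r - 3 * (k+1) + 2).descFactorial k : ℕ) : ℝ)
        = (Nat.factorial k : ℝ) * ((r - 3 * (k+1) + 2).choose k : ℝ) := by exact_mod_cast h
    rw [hD2] at h'
    rw [eq_div_iff hfacpos.ne']
    linarith [h']
  have hrk : ((r - k : ℕ) : ℝ) = (r:ℝ) - k := by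
    rw [Nat.cast_sub (by omega)]
  have hQ : (r.choose (k+1) : ℝ) = ((r:ℝ) - k) * E / (a * (Nat.factorial k : ℝ)) := by
    have h := Nat.descFactorial_eq_factorial_mul_choose r (k+1)
    rw [Nat.descFactorial_succ, Nat.factorial_succ] at h
    have h' : ((r - k : ℕ) : ℝ) * ((r.descFactorial k : ℕ) : ℝ)
        = ((k+1 : ℕ) : ℝ) * (Nat.factorial k : ℝ) * (r.choose (k+1) : ℝ) := by exact_mod_cast h
    rw [hrk, hE] at h'
    rw [eq_div_iff (by positivity), ha]
    push_cast at h' ⊢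
    linear_combination -h'
  have hrk1 : (1:ℝ) ≤ (r:ℝ) - k := by
    have : ((k:ℝ)) + 1 ≤ r := by exact_mod_cast hkr
    linarith
  simp only [Nat.add_sub_cancel]
  rw [hch1, hch2, hQ, ge_iff_le]
  have hsa : ((k:ℝ) + 1) = a := ha.symm
  push_cast
  rw [hsa]
  have lhs_eq : D1 / (Nat.factorial k : ℝ) * (D2 / (Nat.factorial k : ℝ)) / (((r:ℝ) - k) * E / (a * (Nat.factorial k : ℝ))) ^ 2
      = a ^ 2 * (D1 * D2) / ((((r:ℝ) - k)) ^ 2 * E ^ 2) := by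
    field_simp
  rw [lhs_eq]
  calc a ^ 2 / (r:ℝ) ^ 2 * (1 - 20 * a ^ 2 / r)
      = a ^ 2 * ((1 - 20 * a ^ 2 / r) * E ^ 2) / ((r:ℝ) ^ 2 * E ^ 2) := by
        field_simp
    _ ≤ a ^ 2 * (D1 * D2) / ((((r:ℝ) - k)) ^ 2 * E ^ 2) := by
        apply div_le_div₀
        · have : (0:ℝ) ≤ D1 * D2 := le_trans (by positivity) key
          positivity
        · exact mul_le_mul_of_nonneg_left key (sq_nonneg a)
        · positivity
        · have h1 : ((r:ℝ) - k) ^ 2 ≤ (r:ℝ) ^ 2 := by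
            linarith [mul_nonneg (Nat.cast_nonneg k : (0:ℝ) ≤ (k:ℝ))
              (by linarith : (0:ℝ) ≤ 2 * (r:ℝ) - k)]
          exact mul_le_mul_of_nonneg_right h1 (sq_nonneg E)
end
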